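/- arXiv:2203.01925 — 6 statements merged into one kernel-verified Lean document; each statement's English description precedes it below -/
import Mathlib

section
/- Let M : ℝ^d → ℝ be an affine function, M(x) = ⟨g, x⟩ + b with g ≠ 0 (the margin of a linear classification model). Fix z ∈ ℝ^d with M(z) > 0 and δ ∈ (0,1). Then the cosine of the angle between the expected gradient estimator v(R) and g tends to 1 as R → ∞, i.e., the function R ↦ ⟨v(R), g⟩ / (‖v(R)‖·‖g‖) tends to 1 along the filter atTop (and v(R) ≠ 0 for all sufficiently large R). (Theorem 1, asymptotic unbiasedness of the direction estimator.) -/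
open MeasureTheory Metric Filter
open scoped RealInnerProductSpace

noncomputable section

/-- `Φ(x) = 0` if `M x > 0` (point classified into the target class), `-1` otherwise. -/
def Phi {d : ℕ} (M : EuclideanSpace ℝ (Fin d) → ℝ) (x : EuclideanSpace ℝ (Fin d)) : ℝ :=
  if 0 < M x then 0 else -1

/-- The expected gradient estimator `v(R) = ∫_{S^{d-1}} Φ(z + δR·u) · u dμ(u)`. -/
def gradEst {d : ℕ} (μ : Measure (EuclideanSpace ℝ (Fin d)))
    (M : EuclideanSpace ℝ (Fin d) → ℝ) (z : EuclideanSpace ℝ (Fin d)) (δ R : ℝ) :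
    EuclideanSpace ℝ (Fin d) :=
  ∫ u, Phi M (z + (δ * R) • u) • u ∂μ

/-- Any ball centered on the unit sphere has positive measure for a rotation-invariant
probability measure concentrated on the sphere. -/
lemma cap_pos {d : ℕ} (μ : Measure (EuclideanSpace ℝ (Fin d))) [IsProbabilityMeasure μ]
    (hsupp : μ (sphere (0 : EuclideanSpace ℝ (Fin d)) 1)ᶜ = 0)
    (hrot : ∀ e : EuclideanSpace ℝ (Fin d) ≃ₗᵢ[ℝ] EuclideanSpace ℝ (Fin d),
      μ.map e = μ)
    (y : EuclideanSpace ℝ (Fin d)) (hy : ‖y‖ = 1) (r : ℝ) (hr : 0 < r) :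
    0 < μ (ball y r) := by
  by_contra h
  rw [not_lt, nonpos_iff_eq_zero] at h
  have hball : ∀ x : EuclideanSpace ℝ (Fin d), ‖x‖ = 1 → μ (ball x r) = 0 := by
    intro x hx
    set e := Submodule.reflection (ℝ ∙ (y - x))ᗮ with he
    have hexy : e y = x := Submodule.reflection_sub (by rw [hy, hx])
    have h1 : μ (ball x r) = μ (e ⁻¹' ball x r) := by
      conv_lhs => rw [← hrot e]
      rw [Measure.map_apply e.continuous.measurable measurableSet_ball]
    have h2 : e ⁻¹' ball x r = ball y r := by
      ext u
      simp only [Set.mem_preimage, mem_ball]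
      rw [← hexy, e.dist_map]
    rw [h1, h2, h]
  have hcover : sphere (0 : EuclideanSpace ℝ (Fin d)) 1 ⊆
      ⋃ x ∈ sphere (0 : EuclideanSpace ℝ (Fin d)) 1, ball x r :=
    fun u hu => Set.mem_biUnion hu (mem_ball_self hr)
  obtain ⟨t, hts, htf, htcover⟩ :=
    (isCompact_sphere (0 : EuclideanSpace ℝ (Fin d)) 1).elim_finite_subcover_image
      (fun x _ => isOpen_ball) hcover
  have hzero : μ (⋃ x ∈ t, ball x r) = 0 :=
    (measure_biUnion_null_iff htf.countable).mpr fun x hx =>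
      hball x (mem_sphere_zero_iff_norm.mp (hts hx))
  have h1 : (1 : ENNReal) ≤ μ (sphere (0 : EuclideanSpace ℝ (Fin d)) 1) := by
    have := measure_union_le (μ := μ) (sphere (0 : EuclideanSpace ℝ (Fin d)) 1)
      (sphere (0 : EuclideanSpace ℝ (Fin d)) 1)ᶜ
    rw [Set.union_compl_self, measure_univ, hsupp, add_zero] at this
    exact this
  have h2 : μ (sphere (0 : EuclideanSpace ℝ (Fin d)) 1) ≤ μ (⋃ x ∈ t, ball x r) :=
    measure_mono htcover
  rw [hzero] at h2
  exact absurd (h1.trans h2) (by simp)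

set_option maxHeartbeats 1000000 in
/-- Theorem 1, asymptotic unbiasedness. For a linear (affine) margin
`M(x) = ⟪g, x⟫ + b` with `g ≠ 0`, a point `z` with `M(z) > 0` and `δ ∈ (0,1)`, the cosine of
the angle between the expected gradient estimator `v(R)` and `g` tends to `1` as `R → ∞`,
and `v(R) ≠ 0` for all sufficiently large `R`. -/
theorem brepmi_linear_asymptotically_unbiased {d : ℕ} (hd : 2 ≤ d)
    (μ : Measure (EuclideanSpace ℝ (Fin d))) [IsProbabilityMeasure μ]
    (hsupp : μ (sphere (0 : EuclideanSpace ℝ (Fin d)) 1)ᶜ = 0)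
    (hrot : ∀ e : EuclideanSpace ℝ (Fin d) ≃ₗᵢ[ℝ] EuclideanSpace ℝ (Fin d),
      μ.map e = μ)
    (g : EuclideanSpace ℝ (Fin d)) (b : ℝ) (hg : g ≠ 0)
    (M : EuclideanSpace ℝ (Fin d) → ℝ) (hM : ∀ x, M x = ⟪g, x⟫ + b)
    (z : EuclideanSpace ℝ (Fin d)) (hz : 0 < M z)
    (δ : ℝ) (hδ : δ ∈ Set.Ioo (0 : ℝ) 1) :
    Tendsto (fun R : ℝ => ⟪gradEst μ M z δ R, g⟫ / (‖gradEst μ M z δ R‖ * ‖g‖))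
        atTop (nhds 1) ∧
      ∀ᶠ R in atTop, gradEst μ M z δ R ≠ 0 := by
  classical
  obtain ⟨hδ0, hδ1⟩ := hδ
  have hgn : (0 : ℝ) < ‖g‖ := norm_pos_iff.mpr hg
  set n : EuclideanSpace ℝ (Fin d) := ‖g‖⁻¹ • g with hn
  have hnn : ‖n‖ = 1 := by
    rw [hn, norm_smul, norm_inv, norm_norm, inv_mul_cancel₀ hgn.ne']
  have hng : ⟪n, g⟫ = ‖g‖ := by
    rw [hn, real_inner_smul_left, real_inner_self_eq_norm_sq]
    field_simp
  have hgu : ∀ u : EuclideanSpace ℝ (Fin d), ⟪g, u⟫ = ‖g‖ * ⟪n, u⟫ := by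
    intro u
    rw [hn, real_inner_smul_left]
    field_simp
  have hae : ∀ᵐ u ∂μ, ‖u‖ = 1 := by
    rw [ae_iff]
    convert hsupp using 2
    ext u
    simp [mem_sphere_zero_iff_norm]
  have hMcont : Continuous M := by
    have : M = fun x => ⟪g, x⟫ + b := funext hM
    rw [this]
    exact (continuous_const.inner continuous_id).add continuous_const
  have hmeas : ∀ c : ℝ, Measurable (fun u : EuclideanSpace ℝ (Fin d) => Phi M (z + c • u)) := by
    intro c
    have h1 : Continuous fun u : EuclideanSpace ℝ (Fin d) => z + c • u :=
      continuous_const.add (continuous_id.const_smul c)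
    unfold Phi
    exact Measurable.ite
      (measurableSet_lt measurable_const ((hMcont.comp h1).measurable))
      measurable_const measurable_const
  have hint : ∀ c : ℝ, Integrable (fun u => Phi M (z + c • u) • u) μ := by
    intro c
    refine Integrable.mono' (integrable_const (1 : ℝ)) ?_ ?_
    · exact ((hmeas c).smul measurable_id).aestronglyMeasurable
    · filter_upwards [hae] with u hu
      rw [norm_smul, hu, mul_one]
      unfold Phi
      split <;> simp
  -- the key claim
  have key : ∀ R : ℝ, M z / (δ * ‖g‖) < R →
      0 < ⟪n, gradEst μ M z δ R⟫ ∧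
        gradEst μ M z δ R = ⟪n, gradEst μ M z δ R⟫ • n := by
    intro R hR
    have hR0 : 0 < R := lt_trans (div_pos hz (mul_pos hδ0 hgn)) hR
    set c : ℝ := δ * R with hc
    have hc0 : 0 < c := mul_pos hδ0 hR0
    have hMexp : ∀ u, M (z + c • u) = M z + c * (‖g‖ * ⟪n, u⟫) := by
      intro u
      rw [hM, hM, inner_add_right, real_inner_smul_right, hgu u]
      ring
    have hveq : gradEst μ M z δ R = ∫ u, Phi M (z + c • u) • u ∂μ := rfl
    set v : EuclideanSpace ℝ (Fin d) := ∫ u, Phi M (z + c • u) • u ∂μ with hvdef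
    rw [hveq]
    -- orthogonal components vanish
    have horth : ∀ x : EuclideanSpace ℝ (Fin d), ⟪x, n⟫ = 0 → ⟪x, v⟫ = 0 := by
      intro x hx
      set e := Submodule.reflection (ℝ ∙ x)ᗮ with he
      have hes : e.symm = e := Submodule.reflection_symm
      have hen : e n = n := Submodule.reflection_mem_subspace_eq_self
        (Submodule.mem_orthogonal_singleton_iff_inner_right.mpr hx)
      have hex : e x = -x := Submodule.reflection_orthogonalComplement_singleton_eq_neg x
      have heg : e g = g := by
        have hgdec : g = ‖g‖ • n := by
          rw [hn, smul_smul, mul_inv_cancel₀ hgn.ne', one_smul]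
        rw [hgdec, e.map_smul, hen]
      have hePhi : ∀ u, Phi M (z + c • e u) = Phi M (z + c • u) := by
        intro u
        have hgeu : ⟪g, e u⟫ = ⟪g, u⟫ := by
          conv_lhs => rw [← heg]
          rw [e.inner_map_map]
        unfold Phi
        rw [hM, hM, inner_add_right, inner_add_right, real_inner_smul_right,
          real_inner_smul_right, hgeu]
      have h1 : v = ∫ u, Phi M (z + c • u) • (e u) ∂μ := by
        conv_lhs => rw [hvdef, ← hrot e]
        rw [integral_map e.continuous.measurable.aemeasurable
          (by rw [hrot e]
              exact ((hmeas c).smul measurable_id).aestronglyMeasurable)]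
        simp_rw [hePhi]
      have h3 := e.toLinearIsometry.integral_comp_comm (μ := μ)
        (fun u => Phi M (z + c • u) • u)
      simp only [LinearIsometryEquiv.coe_toLinearIsometry] at h3
      have h4 : ∫ u, Phi M (z + c • u) • (e u) ∂μ
          = ∫ u, e (Phi M (z + c • u) • u) ∂μ := by
        simp_rw [e.map_smul]
      have hvmap : v = e v :=
        h1.trans (h4.trans (h3.trans (congrArg (⇑e) hvdef.symm)))
      have hxv : ⟪x, v⟫ = -⟪x, v⟫ := by
        conv_lhs => rw [hvmap]
        calc ⟪x, e v⟫ = ⟪e (e.symm x), e v⟫ := by rw [e.apply_symm_apply]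
          _ = ⟪e.symm x, v⟫ := e.inner_map_map _ _
          _ = ⟪e x, v⟫ := by rw [hes]
          _ = -⟪x, v⟫ := by rw [hex]; exact inner_neg_left x v
      linarith
    set lam : ℝ := ⟪n, v⟫ with hlam
    have hw : ⟪v - lam • n, n⟫ = 0 := by
      rw [inner_sub_left, real_inner_smul_left, real_inner_self_eq_norm_sq, hnn]
      have hcomm : ⟪v, n⟫ = ⟪n, v⟫ := real_inner_comm n v
      rw [hlam, hcomm]
      ring
    have hdecomp : v = lam • n := by
      have h1 : ⟪v - lam • n, v⟫ = 0 := horth _ hw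
      have h2 : ⟪v - lam • n, v - lam • n⟫ = 0 := by
        rw [inner_sub_right, h1, real_inner_smul_right, hw]
        ring
      have h3 : v - lam • n = 0 := inner_self_eq_zero.mp h2
      rw [← sub_eq_zero]
      exact h3
    -- positivity of lam
    set s : ℝ := M z / (c * ‖g‖) with hs
    have hcg : (0 : ℝ) < c * ‖g‖ := mul_pos hc0 hgn
    have hs0 : 0 < s := div_pos hz hcg
    have hs1 : s < 1 := by
      rw [hs, div_lt_one hcg]
      have h1 := (div_lt_iff₀ (mul_pos hδ0 hgn)).mp hR
      calc M z < R * (δ * ‖g‖) := h1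
        _ = c * ‖g‖ := by rw [hc]; ring
    have hsMz : c * (‖g‖ * (-s)) = -(M z) := by
      rw [hs]
      field_simp
    set A : Set (EuclideanSpace ℝ (Fin d)) := {u | ⟪n, u⟫ ≤ -s} with hA
    have hAmeas : MeasurableSet A :=
      measurableSet_le (continuous_const.inner continuous_id).measurable measurable_const
    have hpt : ∀ u, A.indicator (fun _ => s) u ≤ Phi M (z + c • u) * ⟪n, u⟫ := by
      intro u
      by_cases hu : u ∈ A
      · rw [Set.indicator_of_mem hu]
        have h1 : ⟪n, u⟫ ≤ -s := hu
        have h2 : ¬(0 < M (z + c • u)) := by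
          rw [hMexp u]
          push_neg
          have h3 : c * (‖g‖ * ⟪n, u⟫) ≤ c * (‖g‖ * (-s)) :=
            mul_le_mul_of_nonneg_left (mul_le_mul_of_nonneg_left h1 hgn.le) hc0.le
          linarith
        unfold Phi
        rw [if_neg h2]
        linarith
      · rw [Set.indicator_of_notMem hu]
        have h1 : -s < ⟪n, u⟫ := lt_of_not_ge hu
        have h2 : 0 < M (z + c • u) := by
          rw [hMexp u]
          have h3 : c * (‖g‖ * (-s)) < c * (‖g‖ * ⟪n, u⟫) :=
            mul_lt_mul_of_pos_left (mul_lt_mul_of_pos_left h1 hgn) hc0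
          linarith
        unfold Phi
        rw [if_pos h2]
        simp
    have hintA : Integrable (A.indicator fun _ : EuclideanSpace ℝ (Fin d) => s) μ :=
      (integrable_const s).indicator hAmeas
    have hinth : Integrable (fun u => Phi M (z + c • u) * ⟪n, u⟫) μ := by
      have h1 := Integrable.const_inner (𝕜 := ℝ) n (hint c)
      simpa only [real_inner_smul_right] using h1
    have hlamint : lam = ∫ u, Phi M (z + c • u) * ⟪n, u⟫ ∂μ := by
      rw [hlam, hvdef, ← integral_inner (𝕜 := ℝ) (hint c) n]
      simp_rw [real_inner_smul_right]
    -- μ A > 0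
    have hμA : 0 < μ A := by
      have hr2 : (0 : ℝ) < 2 * (1 - s) := by linarith
      set r : ℝ := Real.sqrt (2 * (1 - s)) with hrdef
      have hr0 : 0 < r := Real.sqrt_pos.mpr hr2
      have hball := cap_pos μ hsupp hrot (-n) (by rw [norm_neg, hnn]) r hr0
      have hsub : ball (-n) r ⊆ A ∪ (sphere (0 : EuclideanSpace ℝ (Fin d)) 1)ᶜ := by
        intro u hu
        by_cases husph : u ∈ sphere (0 : EuclideanSpace ℝ (Fin d)) 1
        · left
          have hun : ‖u‖ = 1 := mem_sphere_zero_iff_norm.mp husph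
          have hd1 : ‖u + n‖ < r := by
            have := mem_ball.mp hu
            rwa [dist_eq_norm, sub_neg_eq_add] at this
          have hexpand : ‖u + n‖ ^ 2 = 2 + 2 * ⟪n, u⟫ := by
            rw [norm_add_sq_real, hun, hnn, real_inner_comm]
            ring
          have hrsq : r ^ 2 = 2 * (1 - s) := Real.sq_sqrt hr2.le
          have hlt : ‖u + n‖ ^ 2 < r ^ 2 := by
            apply sq_lt_sq' _ hd1
            linarith [norm_nonneg (u + n)]
          show ⟪n, u⟫ ≤ -s
          linarith
        · right; exact husph
      calc (0 : ENNReal) < μ (ball (-n) r) := hball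
        _ ≤ μ (A ∪ (sphere (0 : EuclideanSpace ℝ (Fin d)) 1)ᶜ) := measure_mono hsub
        _ ≤ μ A + μ (sphere (0 : EuclideanSpace ℝ (Fin d)) 1)ᶜ := measure_union_le _ _
        _ = μ A := by rw [hsupp, add_zero]
    have hμAr : 0 < (μ A).toReal := ENNReal.toReal_pos hμA.ne' (measure_ne_top μ A)
    have hlampos : 0 < lam := by
      rw [hlamint]
      have hle := integral_mono hintA hinth hpt
      rw [integral_indicator_const _ hAmeas, smul_eq_mul, measureReal_def] at hle
      have : 0 < (μ A).toReal * s := mul_pos hμAr hs0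
      linarith
    exact ⟨hlampos, hdecomp⟩
  -- assemble
  have hev : ∀ᶠ R in atTop,
      ⟪gradEst μ M z δ R, g⟫ / (‖gradEst μ M z δ R‖ * ‖g‖) = 1 ∧
        gradEst μ M z δ R ≠ 0 := by
    filter_upwards [eventually_gt_atTop (M z / (δ * ‖g‖))] with R hR
    obtain ⟨hpos, hdec⟩ := key R hR
    set w := gradEst μ M z δ R with hwdef
    have hvg : ⟪w, g⟫ = ⟪n, w⟫ * ‖g‖ := by
      conv_lhs => rw [hdec]
      rw [real_inner_smul_left, hng]
    have hvnorm : ‖w‖ = ⟪n, w⟫ := by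
      conv_lhs => rw [hdec]
      rw [norm_smul, hnn, mul_one, Real.norm_eq_abs, abs_of_pos hpos]
    constructor
    · rw [hvg, hvnorm]
      exact div_self (mul_pos hpos hgn).ne'
    · intro h0
      rw [h0] at hpos
      simp at hpos
  refine ⟨?_, hev.mono fun R h => h.2⟩
  exact Tendsto.congr' (hev.mono fun R h => h.1.symm) tendsto_const_nhds

end
end

section
/- Let M : ℝ^d → ℝ be differentiable, let z ∈ ℝ^d with M(z) > 0, let δ ∈ (0,1), R > 0 and L > 0, and suppose the gradient map x ↦ ∇M(x) is L-Lipschitz on the closed ball of radius δR centered at z. Set w := M(z)/(δR) + (1/2)·L·δ·R. Then for every unit vector u ∈ ℝ^d with ⟨∇M(z), u⟩ > w, one has M(z + δR·u) > 0; in particular Φ(z + δR·u) = 0. (Upper-cap sign determination, Eqs. (23)–(24) of the nonlinear analysis.) -/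
open Metric
open scoped RealInnerProductSpace

noncomputable section

/-- upper-cap sign determination, Eqs. (23)–(24), nonlinear analysis.
Let `M` be differentiable with `M(z) > 0`, `δ ∈ (0,1)`, `R > 0`, `L > 0`, and suppose the
gradient `∇M` is `L`-Lipschitz on the closed ball of radius `δR` around `z`. With
`w := M(z)/(δR) + (1/2)·L·δ·R`, every unit vector `u` with `⟪∇M(z), u⟫ > w` satisfies
`M(z + δR·u) > 0`, and in particular `Φ(z + δR·u) = 0`. -/
theorem brepmi_upper_cap_nonlinear {d : ℕ} (hd : 1 ≤ d)
    (M : EuclideanSpace ℝ (Fin d) → ℝ) (hMdiff : Differentiable ℝ M)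
    (z : EuclideanSpace ℝ (Fin d)) (hz : 0 < M z)
    (δ : ℝ) (hδ : δ ∈ Set.Ioo (0 : ℝ) 1) (R : ℝ) (hR : 0 < R)
    (L : ℝ) (hL : 0 < L)
    (hlip : LipschitzOnWith (Real.toNNReal L) (gradient M) (closedBall z (δ * R)))
    (w : ℝ) (hw : w = M z / (δ * R) + (1 / 2) * L * δ * R)
    (u : EuclideanSpace ℝ (Fin d)) (hu : ‖u‖ = 1) (hcap : ⟪gradient M z, u⟫ > w) :
    0 < M (z + (δ * R) • u) ∧ Phi M (z + (δ * R) • u) = 0 := by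
  set t := δ * R with htdef
  have ht : 0 < t := mul_pos hδ.1 hR
  set F : ℝ → ℝ := fun s => M (z + s • u) - s * ⟪gradient M z, u⟫ + L * s ^ 2 / 2 with hF
  have hline : ∀ s : ℝ, HasDerivAt (fun s : ℝ => z + s • u) u s := by
    intro s
    simpa using ((hasDerivAt_id s).smul_const u).const_add z
  have hg : ∀ s : ℝ, HasDerivAt (fun s : ℝ => M (z + s • u))
      ⟪gradient M (z + s • u), u⟫ s := by
    intro s
    have h1 : HasFDerivAt M (InnerProductSpace.toDual ℝ _ (gradient M (z + s • u)))
        (z + s • u) := (hMdiff (z + s • u)).hasGradientAt.hasFDerivAt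
    simpa [InnerProductSpace.toDual_apply_apply, Function.comp_def] using h1.comp_hasDerivAt s (hline s)
  have hFd : ∀ s : ℝ, HasDerivAt F
      (⟪gradient M (z + s • u), u⟫ - ⟪gradient M z, u⟫ + L * s) s := by
    intro s
    have h2 : HasDerivAt (fun s : ℝ => s * ⟪gradient M z, u⟫) ⟪gradient M z, u⟫ s := by
      simpa using (hasDerivAt_id s).mul_const ⟪gradient M z, u⟫
    have h3 : HasDerivAt (fun s : ℝ => L * s ^ 2 / 2) (L * s) s := by
      have := ((hasDerivAt_pow 2 s).const_mul L).div_const 2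
      refine this.congr_deriv ?_
      ring
    exact ((hg s).sub h2).add h3
  have hmono : MonotoneOn F (Set.Icc 0 t) := by
    apply monotoneOn_of_deriv_nonneg (convex_Icc 0 t)
    · exact fun s _ => ((hFd s).continuousAt.continuousWithinAt)
    · exact fun s _ => ((hFd s).differentiableAt.differentiableWithinAt)
    · intro s hs
      rw [interior_Icc] at hs
      rw [(hFd s).deriv]
      have hmem : z + s • u ∈ closedBall z t := by
        rw [mem_closedBall, dist_eq_norm]
        simp only [add_sub_cancel_left, norm_smul, Real.norm_eq_abs, hu, mul_one]
        rw [abs_of_nonneg hs.1.le]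
        exact hs.2.le
      have hz0 : z ∈ closedBall z t := mem_closedBall_self ht.le
      have hd1 : dist (gradient M z) (gradient M (z + s • u)) ≤ L * s := by
        have := hlip.dist_le_mul z hz0 (z + s • u) hmem
        have hd2 : dist z (z + s • u) = s := by
          rw [dist_eq_norm]
          simp [norm_smul, Real.norm_eq_abs, hu, abs_of_nonneg hs.1.le]
        rw [hd2] at this
        calc dist (gradient M z) (gradient M (z + s • u)) ≤ Real.toNNReal L * s := this
          _ = L * s := by rw [Real.coe_toNNReal L hL.le]
      have hinner : ⟪gradient M z - gradient M (z + s • u), u⟫ ≤ L * s := by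
        calc ⟪gradient M z - gradient M (z + s • u), u⟫
            ≤ ‖gradient M z - gradient M (z + s • u)‖ * ‖u‖ := real_inner_le_norm _ _
          _ = dist (gradient M z) (gradient M (z + s • u)) := by rw [hu, mul_one, dist_eq_norm]
          _ ≤ L * s := hd1
      rw [inner_sub_left] at hinner
      linarith
  have hkey := hmono (Set.left_mem_Icc.2 ht.le) (Set.right_mem_Icc.2 ht.le) ht.le
  simp only [hF, zero_smul, add_zero, zero_mul, zero_pow, mul_zero, zero_div, sub_zero] at hkey
  have hcap' : M z + L * t ^ 2 / 2 < t * ⟪gradient M z, u⟫ := by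
    have := (mul_lt_mul_iff_right₀ ht).2 (hw ▸ hcap)
    have hdiv : t * (M z / t) = M z := by field_simp
    calc M z + L * t ^ 2 / 2 = t * (M z / t + 1 / 2 * L * δ * R) := by
          rw [mul_add, hdiv, htdef]; ring
      _ < t * ⟪gradient M z, u⟫ := this
  have hpos : 0 < M (z + t • u) := by nlinarith [hz]
  exact ⟨hpos, by simp [Phi, hpos]⟩

end
end

section
/- Let M : ℝ^d → ℝ be differentiable, let z ∈ ℝ^d with M(z) > 0, let δ ∈ (0,1), R > 0 and L > 0, and suppose the gradient map x ↦ ∇M(x) is L-Lipschitz on the closed ball of radius δR centered at z. Set w := M(z)/(δR) + (1/2)·L·δ·R. Then for every unit vector u ∈ ℝ^d with ⟨∇M(z), u⟩ < −w, one has M(z + δR·u) < 0; in particular Φ(z + δR·u) = −1. (Lower-cap sign determination, Eq. (25) of the nonlinear analysis.) -/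
open Metric
open scoped RealInnerProductSpace

noncomputable section

/-- lower-cap sign determination, Eq. (25), nonlinear analysis.
Let `M` be differentiable with `M(z) > 0`, `δ ∈ (0,1)`, `R > 0`, `L > 0`, and suppose the
gradient `∇M` is `L`-Lipschitz on the closed ball of radius `δR` around `z`. With
`w := M(z)/(δR) + (1/2)·L·δ·R`, every unit vector `u` with `⟪∇M(z), u⟫ < −w` satisfies
`M(z + δR·u) < 0`, and in particular `Φ(z + δR·u) = −1`. -/
theorem brepmi_lower_cap_nonlinear {d : ℕ} (hd : 1 ≤ d)
    (M : EuclideanSpace ℝ (Fin d) → ℝ) (hMdiff : Differentiable ℝ M)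
    (z : EuclideanSpace ℝ (Fin d)) (hz : 0 < M z)
    (δ : ℝ) (hδ : δ ∈ Set.Ioo (0 : ℝ) 1) (R : ℝ) (hR : 0 < R)
    (L : ℝ) (hL : 0 < L)
    (hlip : LipschitzOnWith (Real.toNNReal L) (gradient M) (closedBall z (δ * R)))
    (w : ℝ) (hw : w = M z / (δ * R) + (1 / 2) * L * δ * R)
    (u : EuclideanSpace ℝ (Fin d)) (hu : ‖u‖ = 1) (hcap : ⟪gradient M z, u⟫ < -w) :
    M (z + (δ * R) • u) < 0 ∧ Phi M (z + (δ * R) • u) = -1 := by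
  set r : ℝ := δ * R with hr
  have hrpos : 0 < r := mul_pos hδ.1 hR
  set v : EuclideanSpace ℝ (Fin d) := r • u with hv
  have hvnorm : ‖v‖ = r := by
    rw [hv, norm_smul, hu, Real.norm_eq_abs, abs_of_pos hrpos, mul_one]
  -- g t = M (z + t • v)
  set g : ℝ → ℝ := fun t => M (z + t • v) with hg
  have hgd : ∀ t : ℝ, HasDerivAt g ⟪gradient M (z + t • v), v⟫ t := by
    intro t
    have h1 : HasDerivAt (fun t : ℝ => z + t • v) v t := by
      simpa using ((hasDerivAt_id t).smul_const v).const_add z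
    have h2 := ((hMdiff (z + t • v)).hasGradientAt.hasFDerivAt).comp_hasDerivAt t h1
    simpa [InnerProductSpace.toDual_apply_apply, hg, Function.comp_def] using h2
  set c : ℝ := ⟪gradient M z, v⟫ with hc
  set K : ℝ := L * r ^ 2 / 2 with hK
  set h : ℝ → ℝ := fun t => g t - t * c - K * t ^ 2 with hh
  have hhd : ∀ t : ℝ, HasDerivAt h (⟪gradient M (z + t • v), v⟫ - c - K * (2 * t)) t := by
    intro t
    have h3 := ((hgd t).sub ((hasDerivAt_id t).mul_const c)).sub
      ((hasDerivAt_pow 2 t).const_mul K)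
    refine h3.congr_deriv ?_
    push_cast
    ring
  have hmono : h 1 ≤ h 0 := by
    have hcont : ContinuousOn h (Set.Icc 0 1) :=
      fun t _ => ((hhd t).differentiableAt.continuousAt).continuousWithinAt
    have hder : ∀ t ∈ interior (Set.Icc (0:ℝ) 1), deriv h t ≤ 0 := by
      intro t ht
      rw [interior_Icc] at ht
      rw [(hhd t).deriv]
      have hmem : z + t • v ∈ closedBall z r := by
        rw [mem_closedBall_iff_norm]
        simp only [add_sub_cancel_left]
        rw [norm_smul, hvnorm, Real.norm_eq_abs, abs_of_pos ht.1]
        nlinarith [ht.2]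
      have hlipb : ‖gradient M (z + t • v) - gradient M z‖ ≤ L * (t * r) := by
        have := hlip.norm_sub_le hmem (mem_closedBall_self (le_of_lt hrpos))
        calc ‖gradient M (z + t • v) - gradient M z‖
            ≤ (Real.toNNReal L) * ‖(z + t • v) - z‖ := this
          _ = L * ‖t • v‖ := by
              rw [Real.coe_toNNReal _ hL.le]; simp
          _ = L * (t * r) := by
              rw [norm_smul, hvnorm, Real.norm_eq_abs, abs_of_pos ht.1]
      have hinner : ⟪gradient M (z + t • v), v⟫ - c ≤ L * (t * r) * r := by
        rw [hc, ← inner_sub_left]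
        calc ⟪gradient M (z + t • v) - gradient M z, v⟫
            ≤ ‖gradient M (z + t • v) - gradient M z‖ * ‖v‖ := real_inner_le_norm _ _
          _ ≤ L * (t * r) * r := by
              rw [hvnorm]; exact mul_le_mul_of_nonneg_right hlipb hrpos.le
      have : K * (2 * t) = L * (t * r) * r := by rw [hK]; ring
      linarith
    have := antitoneOn_of_deriv_nonpos (convex_Icc 0 1) hcont
      (fun t ht => ((hhd t).differentiableAt).differentiableWithinAt) hder
    exact this (by norm_num) (by norm_num) zero_le_one
  have hval : M (z + v) ≤ M z + c + K := by
    have h0 : h 0 = M z := by simp [hh, hg]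
    have h1 : h 1 = M (z + v) - c - K := by simp [hh, hg]
    linarith [hmono, h0.le, h1.le]
  have hcv : c = r * ⟪gradient M z, u⟫ := by
    rw [hc, hv, real_inner_smul_right]
  have hrw : r * w = M z + K := by
    rw [hw, hK]
    field_simp
    ring
  have hneg : M (z + v) < 0 := by
    have h2 : c < -(r * w) := by
      rw [hcv]
      have := mul_lt_mul_of_pos_left hcap hrpos
      linarith [this]
    calc M (z + v) ≤ M z + c + K := hval
      _ < M z - r * w + K := by linarith
      _ = 0 := by rw [hrw]; ring
  have : M (z + (δ * R) • u) < 0 := by rwa [← hr, ← hv]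
  exact ⟨this, by simp [Phi, not_lt.mpr hneg.le]⟩


end
end

section
/- Let v ∈ ℝ^d be a unit vector, let c ≥ 0, and let Ψ : S^{d-1} → {0, −1} be a measurable function such that Ψ(u) = 0 whenever ⟨v,u⟩ > c and Ψ(u) = −1 whenever ⟨v,u⟩ < −c. Then ⟨∫_{S^{d-1}} Ψ(u)·u dμ(u), v⟩ ≥ ∫_{{u : ⟨v,u⟩ < −c}} |⟨v,u⟩| dμ(u) − c·μ({u : |⟨v,u⟩| ≤ c}). (Lower bound on the component of the expected estimator along the gradient direction.) -/
open MeasureTheory Metric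
open scoped RealInnerProductSpace

noncomputable section

/-- lower bound on the gradient-direction component of the expected
estimator. Let `μ` be the uniform (rotation-invariant) probability measure on the unit
sphere of `ℝ^d`, `v` a unit vector, `c ≥ 0`, and `Ψ` a measurable `{0,−1}`-valued function
on the sphere with `Ψ(u) = 0` when `⟪v,u⟫ > c` and `Ψ(u) = −1` when `⟪v,u⟫ < −c`. Then
`⟪∫ Ψ(u)·u dμ(u), v⟫ ≥ ∫_{⟪v,u⟫ < −c} |⟪v,u⟫| dμ − c·μ({|⟪v,u⟫| ≤ c})`. -/
theorem brepmi_estimator_component_lower_bound {d : ℕ} (hd : 2 ≤ d)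
    (μ : Measure (EuclideanSpace ℝ (Fin d))) [IsProbabilityMeasure μ]
    (hsupp : μ (sphere (0 : EuclideanSpace ℝ (Fin d)) 1)ᶜ = 0)
    (hrot : ∀ e : EuclideanSpace ℝ (Fin d) ≃ₗᵢ[ℝ] EuclideanSpace ℝ (Fin d),
      μ.map e = μ)
    (v : EuclideanSpace ℝ (Fin d)) (hv : ‖v‖ = 1) (c : ℝ) (hc : 0 ≤ c)
    (Ψ : EuclideanSpace ℝ (Fin d) → ℝ) (hΨmeas : Measurable Ψ)
    (hΨrange : ∀ u, Ψ u = 0 ∨ Ψ u = -1)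
    (hΨupper : ∀ u : EuclideanSpace ℝ (Fin d), ‖u‖ = 1 → ⟪v, u⟫ > c → Ψ u = 0)
    (hΨlower : ∀ u : EuclideanSpace ℝ (Fin d), ‖u‖ = 1 → ⟪v, u⟫ < -c → Ψ u = -1) :
    ⟪∫ u, Ψ u • u ∂μ, v⟫ ≥
      (∫ u in {u : EuclideanSpace ℝ (Fin d) | ⟪v, u⟫ < -c}, |⟪v, u⟫| ∂μ) -
        c * (μ {u : EuclideanSpace ℝ (Fin d) | |⟪v, u⟫| ≤ c}).toReal := by
  classical
  set A : Set (EuclideanSpace ℝ (Fin d)) := {u | ⟪v, u⟫ < -c} with hA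
  set B : Set (EuclideanSpace ℝ (Fin d)) := {u | |⟪v, u⟫| ≤ c} with hB
  have hcont : Continuous fun u : EuclideanSpace ℝ (Fin d) => ⟪v, u⟫ :=
    continuous_const.inner continuous_id
  have hmA : MeasurableSet A := measurableSet_lt hcont.measurable measurable_const
  have hmB : MeasurableSet B := measurableSet_le hcont.measurable.abs measurable_const
  have hae : ∀ᵐ u ∂μ, ‖u‖ = 1 := by
    have h1 : ∀ᵐ u ∂μ, u ∈ sphere (0 : EuclideanSpace ℝ (Fin d)) 1 :=
      ae_iff.mpr hsupp
    filter_upwards [h1] with u hu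
    simpa [mem_sphere_iff_norm] using hu
  have hΨbd : ∀ u, |Ψ u| ≤ 1 := by
    intro u; rcases hΨrange u with h | h <;> simp [h]
  -- integrability of the vector integrand
  have hint1 : Integrable (fun u => Ψ u • u) μ := by
    refine Integrable.mono' (integrable_const 1) ?_ ?_
    · exact (hΨmeas.smul measurable_id).aestronglyMeasurable
    · filter_upwards [hae] with u hu
      rw [norm_smul, hu, mul_one]
      exact hΨbd u
  have hinner : ⟪∫ u, Ψ u • u ∂μ, v⟫ = ∫ u, Ψ u * ⟪v, u⟫ ∂μ := by
    rw [real_inner_comm, ← integral_inner hint1]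
    simp only [real_inner_smul_right]
  -- the scalar integrand f and its lower bound g
  set f : EuclideanSpace ℝ (Fin d) → ℝ := fun u => Ψ u * ⟪v, u⟫ with hf
  set g : EuclideanSpace ℝ (Fin d) → ℝ :=
    fun u => A.indicator (fun u => |⟪v, u⟫|) u + B.indicator (fun _ => -c) u with hg
  have hinnbd : ∀ᵐ u ∂μ, |⟪v, u⟫| ≤ 1 := by
    filter_upwards [hae] with u hu
    calc |⟪v, u⟫| ≤ ‖v‖ * ‖u‖ := abs_real_inner_le_norm v u
    _ = 1 := by rw [hv, hu, mul_one]
  have hfint : Integrable f μ := by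
    refine Integrable.mono' (integrable_const 1) ?_ ?_
    · exact (hΨmeas.mul hcont.measurable).aestronglyMeasurable
    · filter_upwards [hinnbd] with u hu
      rw [hf]
      calc |Ψ u * ⟪v, u⟫| = |Ψ u| * |⟪v, u⟫| := abs_mul _ _
      _ ≤ 1 * 1 := mul_le_mul (hΨbd u) hu (abs_nonneg _) zero_le_one
      _ = 1 := one_mul 1
  have hgAint : Integrable (A.indicator fun u => |⟪v, u⟫|) μ := by
    refine Integrable.mono' (integrable_const 1) ?_ ?_
    · exact (hcont.measurable.abs.indicator hmA).aestronglyMeasurable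
    · filter_upwards [hinnbd] with u hu
      rw [Real.norm_eq_abs]
      calc |A.indicator (fun u => |⟪v, u⟫|) u| ≤ |⟪v, u⟫| := by
            by_cases hm : u ∈ A
            · rw [Set.indicator_of_mem hm, abs_abs]
            · rw [Set.indicator_of_notMem hm, abs_zero]; exact abs_nonneg _
      _ ≤ 1 := hu
  have hgBint : Integrable (B.indicator fun _ : EuclideanSpace ℝ (Fin d) => -c) μ :=
    (integrable_const (-c)).indicator hmB
  have hgint : Integrable g μ := hgAint.add hgBint
  -- pointwise a.e. bound g ≤ f
  have hle : g ≤ᵐ[μ] f := by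
    filter_upwards [hae] with u hu
    show A.indicator (fun u => |⟪v, u⟫|) u + B.indicator (fun _ => -c) u ≤ Ψ u * ⟪v, u⟫
    by_cases h1 : ⟪v, u⟫ < -c
    · have hBnot : u ∉ B := by
        simp only [hB, Set.mem_setOf_eq, not_le]
        have : c < -⟪v, u⟫ := by linarith
        calc c < -⟪v, u⟫ := this
        _ ≤ |⟪v, u⟫| := neg_le_abs _
      rw [Set.indicator_of_mem (show u ∈ A from h1), Set.indicator_of_notMem hBnot,
        add_zero, hΨlower u hu h1]
      have : |⟪v, u⟫| = -⟪v, u⟫ := abs_of_neg (by linarith)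
      rw [this]; linarith
    · have hAnot : u ∉ A := h1
      rw [Set.indicator_of_notMem hAnot, zero_add]
      by_cases h2 : u ∈ B
      · rw [Set.indicator_of_mem h2]
        have hb : |⟪v, u⟫| ≤ c := h2
        have : |Ψ u * ⟪v, u⟫| ≤ c := by
          calc |Ψ u * ⟪v, u⟫| = |Ψ u| * |⟪v, u⟫| := abs_mul _ _
          _ ≤ 1 * c := mul_le_mul (hΨbd u) hb (abs_nonneg _) zero_le_one
          _ = c := one_mul c
        linarith [neg_abs_le (Ψ u * ⟪v, u⟫)]
      · rw [Set.indicator_of_notMem h2]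
        have hgt : c < ⟪v, u⟫ := by
          have h2' : c < |⟪v, u⟫| := not_le.mp h2
          have h1' : -c ≤ ⟪v, u⟫ := not_lt.mp h1
          rcases lt_abs.mp h2' with h | h
          · exact h
          · linarith
        rw [hΨupper u hu hgt, zero_mul]
  -- compute ∫ g
  have hgval : ∫ u, g u ∂μ =
      (∫ u in A, |⟪v, u⟫| ∂μ) - c * (μ B).toReal := by
    rw [hg, integral_add hgAint hgBint, integral_indicator hmA, integral_indicator hmB,
      setIntegral_const]
    have : μ.real B • (-c) = -(c * (μ B).toReal) := by
      rw [smul_eq_mul, measureReal_def]; ring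
    rw [this]; ring
  calc (∫ u in A, |⟪v, u⟫| ∂μ) - c * (μ B).toReal = ∫ u, g u ∂μ := hgval.symm
  _ ≤ ∫ u, f u ∂μ := integral_mono_ae hgint hfint hle
  _ = ⟪∫ u, Ψ u • u ∂μ, v⟫ := hinner.symm

end
end

section
/- Let v ∈ ℝ^d be a unit vector, let c ≥ 0, and let Ψ : S^{d-1} → {0, −1} be a measurable function such that Ψ(u) = 0 whenever ⟨v,u⟩ > c and Ψ(u) = −1 whenever ⟨v,u⟩ < −c. Then for every unit vector w ∈ ℝ^d with ⟨v, w⟩ = 0, one has |⟨∫_{S^{d-1}} Ψ(u)·u dμ(u), w⟩| ≤ μ({u ∈ S^{d-1} : |⟨v,u⟩| ≤ c}). (The components of the expected estimator orthogonal to the gradient direction are controlled by the annulus probability.) -/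
open MeasureTheory Metric
open scoped RealInnerProductSpace

noncomputable section

private lemma integrable_of_bdd {α : Type*} [MeasurableSpace α] {μ : Measure α}
    [IsFiniteMeasure μ] {f : α → ℝ} (hf : AEStronglyMeasurable f μ) (C : ℝ)
    (h : ∀ᵐ x ∂μ, ‖f x‖ ≤ C) : Integrable f μ :=
  (integrable_const C).mono' hf h

/-- orthogonal components of the expected estimator are controlled by the
annulus probability. Let `μ` be the uniform (rotation-invariant) probability measure on the
unit sphere of `ℝ^d`, `v` a unit vector, `c ≥ 0`, and `Ψ` a measurable `{0,−1}`-valued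
function on the sphere with `Ψ(u) = 0` when `⟪v,u⟫ > c` and `Ψ(u) = −1` when `⟪v,u⟫ < −c`.
Then for every unit vector `w ⊥ v`,
`|⟪∫ Ψ(u)·u dμ(u), w⟫| ≤ μ({u : |⟪v,u⟫| ≤ c})`. -/
theorem brepmi_estimator_orthogonal_component_bound {d : ℕ} (hd : 2 ≤ d)
    (μ : Measure (EuclideanSpace ℝ (Fin d))) [IsProbabilityMeasure μ]
    (hsupp : μ (sphere (0 : EuclideanSpace ℝ (Fin d)) 1)ᶜ = 0)
    (hrot : ∀ e : EuclideanSpace ℝ (Fin d) ≃ₗᵢ[ℝ] EuclideanSpace ℝ (Fin d),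
      μ.map e = μ)
    (v : EuclideanSpace ℝ (Fin d)) (hv : ‖v‖ = 1) (c : ℝ) (hc : 0 ≤ c)
    (Ψ : EuclideanSpace ℝ (Fin d) → ℝ) (hΨmeas : Measurable Ψ)
    (hΨrange : ∀ u, Ψ u = 0 ∨ Ψ u = -1)
    (hΨupper : ∀ u : EuclideanSpace ℝ (Fin d), ‖u‖ = 1 → ⟪v, u⟫ > c → Ψ u = 0)
    (hΨlower : ∀ u : EuclideanSpace ℝ (Fin d), ‖u‖ = 1 → ⟪v, u⟫ < -c → Ψ u = -1)
    (w : EuclideanSpace ℝ (Fin d)) (hw : ‖w‖ = 1) (hvw : ⟪v, w⟫ = 0) :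
    |⟪∫ u, Ψ u • u ∂μ, w⟫| ≤
      (μ {u : EuclideanSpace ℝ (Fin d) | |⟪v, u⟫| ≤ c}).toReal := by
  -- a.e. every point is on the sphere
  have hμs : ∀ᵐ u ∂μ, ‖u‖ = 1 := by
    have h1 : ∀ᵐ u ∂μ, u ∈ sphere (0 : EuclideanSpace ℝ (Fin d)) 1 := by
      rw [ae_iff]; simpa [Set.compl_def] using hsupp
    filter_upwards [h1] with u hu
    simpa [mem_sphere_zero_iff_norm] using hu
  have hΨabs : ∀ u, |Ψ u| ≤ 1 := by
    intro u; rcases hΨrange u with h | h <;> simp [h]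
  -- continuity/measurability of inner products
  have hcv : Continuous fun u : EuclideanSpace ℝ (Fin d) => ⟪v, u⟫ :=
    continuous_const.inner continuous_id
  have hcw : Continuous fun u : EuclideanSpace ℝ (Fin d) => ⟪w, u⟫ :=
    continuous_const.inner continuous_id
  set A : Set (EuclideanSpace ℝ (Fin d)) := {u | |⟪v, u⟫| ≤ c} with hA
  set B : Set (EuclideanSpace ℝ (Fin d)) := {u | ⟪v, u⟫ < -c} with hB
  have hAmeas : MeasurableSet A := by
    have : A = (fun u : EuclideanSpace ℝ (Fin d) => |⟪v, u⟫|) ⁻¹' Set.Iic c := rfl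
    rw [this]; exact (hcv.abs.measurable) measurableSet_Iic
  have hBmeas : MeasurableSet B := by
    have : B = (fun u : EuclideanSpace ℝ (Fin d) => ⟪v, u⟫) ⁻¹' Set.Iio (-c) := rfl
    rw [this]; exact hcv.measurable measurableSet_Iio
  -- integrability of the main integrand
  have hFint : Integrable (fun u : EuclideanSpace ℝ (Fin d) => Ψ u • u) μ := by
    refine (integrable_const (1 : ℝ)).mono'
      ((hΨmeas.smul measurable_id).aestronglyMeasurable) ?_
    filter_upwards [hμs] with u hu
    rw [norm_smul, hu, mul_one]
    exact hΨabs u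
  set g : EuclideanSpace ℝ (Fin d) → ℝ := fun u => Ψ u * ⟪w, u⟫ with hg
  have hgmeas : Measurable g := hΨmeas.mul hcw.measurable
  have hgbd : ∀ᵐ u ∂μ, ‖g u‖ ≤ 1 := by
    filter_upwards [hμs] with u hu
    have h1 : |⟪w, u⟫| ≤ 1 := by
      calc |⟪w, u⟫| ≤ ‖w‖ * ‖u‖ := abs_real_inner_le_norm w u
        _ = 1 := by rw [hw, hu, mul_one]
    calc ‖g u‖ = |Ψ u| * |⟪w, u⟫| := abs_mul _ _
      _ ≤ 1 * 1 := mul_le_mul (hΨabs u) h1 (abs_nonneg _) zero_le_one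
      _ = 1 := mul_one 1
  have hgint : Integrable g μ := integrable_of_bdd hgmeas.aestronglyMeasurable 1 hgbd
  -- step 1: inner of integral = integral of inner
  have hstep1 : ⟪∫ u, Ψ u • u ∂μ, w⟫ = ∫ u, g u ∂μ := by
    rw [real_inner_comm]
    rw [← integral_inner hFint w]
    exact integral_congr_ae (Filter.Eventually.of_forall fun u => real_inner_smul_right w u (Ψ u))
  -- the reflection across (ℝ ∙ w)ᗮ
  set e : EuclideanSpace ℝ (Fin d) ≃ₗᵢ[ℝ] EuclideanSpace ℝ (Fin d) :=
    Submodule.reflection (ℝ ∙ w)ᗮ with he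
  have hev : e v = v := by
    apply Submodule.reflection_mem_subspace_eq_self
    rw [Submodule.mem_orthogonal_singleton_iff_inner_right, real_inner_comm]
    exact hvw
  have hew : e w = -w := Submodule.reflection_orthogonalComplement_singleton_eq_neg w
  have hinnv : ∀ u, ⟪v, e u⟫ = ⟪v, u⟫ := by
    intro u
    conv_rhs => rw [← e.inner_map_map v u, hev]
  have hinnw : ∀ u, ⟪w, e u⟫ = -⟪w, u⟫ := by
    intro u
    have := e.inner_map_map w u
    rw [hew, inner_neg_left] at this
    linarith
  -- the lower-cap piece
  set f : EuclideanSpace ℝ (Fin d) → ℝ :=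
    B.indicator (fun u => -⟪w, u⟫) with hf
  have hfmeas : Measurable f := (hcw.neg.measurable).indicator hBmeas
  have hfbd : ∀ᵐ u ∂μ, ‖f u‖ ≤ 1 := by
    filter_upwards [hμs] with u hu
    show ‖B.indicator (fun u => -⟪w, u⟫) u‖ ≤ 1
    by_cases h : u ∈ B
    · rw [Set.indicator_of_mem h]
      rw [norm_neg]
      calc ‖⟪w, u⟫‖ ≤ ‖w‖ * ‖u‖ := abs_real_inner_le_norm w u
        _ = 1 := by rw [hw, hu, mul_one]
    · rw [Set.indicator_of_notMem h]; simp
  have hfint : Integrable f μ := integrable_of_bdd hfmeas.aestronglyMeasurable 1 hfbd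
  have hfe : ∀ u, f (e u) = -f u := by
    intro u
    have hmem : e u ∈ B ↔ u ∈ B := by
      simp only [hB, Set.mem_setOf_eq, hinnv u]
    show B.indicator (fun u => -⟪w, u⟫) (e u) = -B.indicator (fun u => -⟪w, u⟫) u
    by_cases h : u ∈ B
    · rw [Set.indicator_of_mem (hmem.mpr h), Set.indicator_of_mem h, hinnw]
    · rw [Set.indicator_of_notMem (fun hh => h (hmem.mp hh)),
        Set.indicator_of_notMem h, neg_zero]
  have hfzero : ∫ u, f u ∂μ = 0 := by
    have hmap : ∫ u, f u ∂μ = ∫ u, f (e u) ∂μ := by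
      conv_lhs => rw [← hrot e]
      rw [integral_map e.continuous.measurable.aemeasurable]
      rw [hrot e]
      exact hfmeas.aestronglyMeasurable
    have : ∫ u, f u ∂μ = -∫ u, f u ∂μ := by
      conv_lhs => rw [hmap]
      rw [integral_congr_ae (Filter.Eventually.of_forall hfe), integral_neg]
    linarith
  -- a.e. decomposition of g
  have hdecomp : ∀ᵐ u ∂μ, g u = A.indicator g u + f u := by
    filter_upwards [hμs] with u hu
    show g u = A.indicator g u + B.indicator (fun u => -⟪w, u⟫) u
    rcases le_or_gt (|⟪v, u⟫|) c with h | h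
    · have huA : u ∈ A := h
      have huB : u ∉ B := by
        simp only [hB, Set.mem_setOf_eq, not_lt]
        exact neg_le_of_abs_le h
      rw [Set.indicator_of_mem huA, Set.indicator_of_notMem huB, add_zero]
    · have huA : u ∉ A := by simpa [hA] using h.not_ge
      rcases lt_or_ge c (⟪v, u⟫) with h2 | h2
      · have huB : u ∉ B := by
          simp only [hB, Set.mem_setOf_eq, not_lt]
          linarith
        rw [Set.indicator_of_notMem huA, Set.indicator_of_notMem huB, hg]
        simp [hΨupper u hu h2]
      · have h3 : ⟪v, u⟫ < -c := by
          rcases abs_cases (⟪v, u⟫ : ℝ) with ⟨h4, h5⟩ | ⟨h4, h5⟩ <;> linarith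
        have huB : u ∈ B := h3
        rw [Set.indicator_of_notMem huA, Set.indicator_of_mem huB, hg]
        simp [hΨlower u hu h3]
  have hindint : Integrable (A.indicator g) μ := hgint.indicator hAmeas
  have hsplit : ∫ u, g u ∂μ = ∫ u, A.indicator g u ∂μ := by
    rw [integral_congr_ae hdecomp, integral_add hindint hfint, hfzero, add_zero]
  -- bound the annulus piece
  have hbound : |∫ u, A.indicator g u ∂μ| ≤ (μ A).toReal := by
    have h1 : |∫ u, A.indicator g u ∂μ| ≤ ∫ u, ‖A.indicator g u‖ ∂μ := by
      simpa using norm_integral_le_integral_norm (A.indicator g)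
    have h2 : ∀ᵐ u ∂μ, ‖A.indicator g u‖ ≤ A.indicator (fun _ => (1 : ℝ)) u := by
      filter_upwards [hgbd] with u hu
      by_cases h : u ∈ A
      · rw [Set.indicator_of_mem h, Set.indicator_of_mem h]; exact hu
      · rw [Set.indicator_of_notMem h, Set.indicator_of_notMem h]; simp
    have h3 : ∫ u, ‖A.indicator g u‖ ∂μ ≤ ∫ u, A.indicator (fun _ => (1 : ℝ)) u ∂μ := by
      refine integral_mono_ae hindint.norm ?_ h2
      exact (integrable_const (1 : ℝ)).indicator hAmeas
    have h4 : ∫ u, A.indicator (fun _ => (1 : ℝ)) u ∂μ = (μ A).toReal := by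
      rw [integral_indicator_const (1 : ℝ) hAmeas, smul_eq_mul, mul_one, measureReal_def]
    linarith
  rw [hstep1, hsplit]
  exact hbound

end
end

section
/- Let v ∈ ℝ^d be a unit vector, let c ≥ 0 with c ≤ 1, and let Ψ : S^{d-1} → {0, −1} be a measurable function such that Ψ(u) = 0 whenever ⟨v,u⟩ > c and Ψ(u) = −1 whenever ⟨v,u⟩ < −c. Then ‖∫_{S^{d-1}} Ψ(u)·u dμ(u) − (1/2)·(∫_{S^{d-1}} |⟨v,u⟩| dμ(u))·v‖ ≤ 2·μ({u ∈ S^{d-1} : |⟨v,u⟩| ≤ c}). (The key decomposition bound, Eq. (18) of the proof in corrected form: the expected boundary-repulsion estimator deviates from a fixed positive multiple of the gradient direction by at most twice the annulus probability.) -/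
open MeasureTheory Metric
open scoped RealInnerProductSpace

noncomputable section

/-- key decomposition bound, Eq. (18) in corrected form. Let `μ` be the
uniform (rotation-invariant) probability measure on the unit sphere of `ℝ^d`, `v` a unit
vector, `0 ≤ c ≤ 1`, and `Ψ` a measurable `{0,−1}`-valued function on the sphere with
`Ψ(u) = 0` when `⟪v,u⟫ > c` and `Ψ(u) = −1` when `⟪v,u⟫ < −c`. Then the expected
boundary-repulsion estimator deviates from the fixed positive multiple
`(1/2)·(∫ |⟪v,u⟫| dμ)·v` of the gradient direction by at most twice the annulus
probability: `‖∫ Ψ(u)·u dμ − (1/2)·(∫ |⟪v,u⟫| dμ)·v‖ ≤ 2·μ({u : |⟪v,u⟫| ≤ c})`. -/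
theorem brepmi_estimator_decomposition_bound {d : ℕ} (hd : 2 ≤ d)
    (μ : Measure (EuclideanSpace ℝ (Fin d))) [IsProbabilityMeasure μ]
    (hsupp : μ (sphere (0 : EuclideanSpace ℝ (Fin d)) 1)ᶜ = 0)
    (hrot : ∀ e : EuclideanSpace ℝ (Fin d) ≃ₗᵢ[ℝ] EuclideanSpace ℝ (Fin d),
      μ.map e = μ)
    (v : EuclideanSpace ℝ (Fin d)) (hv : ‖v‖ = 1)
    (c : ℝ) (hc : 0 ≤ c) (hc1 : c ≤ 1)
    (Ψ : EuclideanSpace ℝ (Fin d) → ℝ) (hΨmeas : Measurable Ψ)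
    (hΨrange : ∀ u, Ψ u = 0 ∨ Ψ u = -1)
    (hΨupper : ∀ u : EuclideanSpace ℝ (Fin d), ‖u‖ = 1 → ⟪v, u⟫ > c → Ψ u = 0)
    (hΨlower : ∀ u : EuclideanSpace ℝ (Fin d), ‖u‖ = 1 → ⟪v, u⟫ < -c → Ψ u = -1) :
    ‖(∫ u, Ψ u • u ∂μ) - ((1 / 2) * ∫ u, |⟪v, u⟫| ∂μ) • v‖ ≤
      2 * (μ {u : EuclideanSpace ℝ (Fin d) | |⟪v, u⟫| ≤ c}).toReal := by
  have hmeasip : Measurable fun u : EuclideanSpace ℝ (Fin d) => ⟪v, u⟫ :=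
    (continuous_const.inner continuous_id).measurable
  -- a.e. every point has norm 1
  have hae : ∀ᵐ u ∂μ, ‖u‖ = 1 := by
    refine ae_iff.2 (measure_mono_null (fun u hu => ?_) hsupp)
    simpa [mem_sphere_zero_iff_norm] using hu
  -- the comparison function
  set Ψ₀ : EuclideanSpace ℝ (Fin d) → ℝ := fun u => if ⟪v, u⟫ < 0 then (-1 : ℝ) else 0
    with hΨ₀def
  have hΨ₀meas : Measurable Ψ₀ :=
    Measurable.ite (measurableSet_lt hmeasip measurable_const) measurable_const measurable_const
  have hΨ₀abs : ∀ u, |Ψ₀ u| ≤ 1 := by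
    intro u; simp only [hΨ₀def]; split <;> norm_num
  have hΨabs : ∀ u, |Ψ u| ≤ 1 := by
    intro u; rcases hΨrange u with h | h <;> rw [h] <;> norm_num
  -- integrabilities
  have hid : AEStronglyMeasurable (fun u : EuclideanSpace ℝ (Fin d) => u) μ :=
    aestronglyMeasurable_id
  have hint : ∀ (f : EuclideanSpace ℝ (Fin d) → ℝ), Measurable f → (∀ u, |f u| ≤ 1) →
      Integrable (fun u => f u • u) μ := by
    intro f hf hf1
    refine Integrable.mono' (integrable_const 1) ((hf.aestronglyMeasurable).smul hid) ?_
    filter_upwards [hae] with u hu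
    rw [norm_smul, hu, mul_one]
    exact hf1 u
  have intΨ : Integrable (fun u => Ψ u • u) μ := hint Ψ hΨmeas hΨabs
  have intΨ₀ : Integrable (fun u => Ψ₀ u • u) μ := hint Ψ₀ hΨ₀meas hΨ₀abs
  have hip1 : ∀ᵐ u ∂μ, |⟪v, u⟫| ≤ 1 := by
    filter_upwards [hae] with u hu
    calc |⟪v, u⟫| ≤ ‖v‖ * ‖u‖ := abs_real_inner_le_norm v u
    _ = 1 := by rw [hv, hu, one_mul]
  have intabs : Integrable (fun u => |⟪v, u⟫|) μ := by
    refine Integrable.mono' (integrable_const 1) hmeasip.abs.aestronglyMeasurable ?_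
    filter_upwards [hip1] with u hu using by simpa using hu
  have intg : Integrable (fun u => Ψ₀ u * ⟪v, u⟫) μ := by
    refine Integrable.mono' (integrable_const 1) (hΨ₀meas.mul hmeasip).aestronglyMeasurable ?_
    filter_upwards [hip1] with u hu
    rw [Real.norm_eq_abs, abs_mul]
    calc |Ψ₀ u| * |⟪v, u⟫| ≤ 1 * 1 := mul_le_mul (hΨ₀abs u) hu (abs_nonneg _) zero_le_one
    _ = 1 := one_mul 1
  -- change of variables for linear isometries
  have key : ∀ (e : EuclideanSpace ℝ (Fin d) ≃ₗᵢ[ℝ] EuclideanSpace ℝ (Fin d))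
      (f : EuclideanSpace ℝ (Fin d) → EuclideanSpace ℝ (Fin d)), AEStronglyMeasurable f μ →
      ∫ u, f u ∂μ = ∫ u, f (e u) ∂μ := by
    intro e f hf
    have h := MeasureTheory.integral_map (φ := e) (μ := μ) (f := f)
      e.continuous.measurable.aemeasurable (by rw [hrot e]; exact hf)
    rw [hrot e] at h
    exact h
  have keyR : ∀ (e : EuclideanSpace ℝ (Fin d) ≃ₗᵢ[ℝ] EuclideanSpace ℝ (Fin d))
      (f : EuclideanSpace ℝ (Fin d) → ℝ), AEStronglyMeasurable f μ →
      ∫ u, f u ∂μ = ∫ u, f (e u) ∂μ := by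
    intro e f hf
    have h := MeasureTheory.integral_map (φ := e) (μ := μ) (f := f)
      e.continuous.measurable.aemeasurable (by rw [hrot e]; exact hf)
    rw [hrot e] at h
    exact h
  -- the reflection through the line spanned by v
  set R : EuclideanSpace ℝ (Fin d) ≃ₗᵢ[ℝ] EuclideanSpace ℝ (Fin d) :=
    Submodule.reflection (ℝ ∙ v) with hRdef
  have hRapp : ∀ u, R u = (2 * ⟪v, u⟫) • v - u := by
    intro u
    rw [hRdef, Submodule.reflection_apply, Submodule.starProjection_unit_singleton ℝ hv, two_smul,
      two_mul, add_smul]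
  have hRip : ∀ u, ⟪v, R u⟫ = ⟪v, u⟫ := by
    intro u
    rw [hRapp]
    simp only [inner_sub_right, real_inner_smul_right, real_inner_self_eq_norm_mul_norm, hv]
    ring
  set I : EuclideanSpace ℝ (Fin d) := ∫ u, Ψ₀ u • u ∂μ with hIdef
  set J : ℝ := ∫ u, Ψ₀ u * ⟪v, u⟫ ∂μ with hJdef
  -- Step A1: I = J • v
  have hA1 : I = J • v := by
    have h1 : I = ∫ u, Ψ₀ (R u) • (R u) ∂μ :=
      key R _ ((hΨ₀meas.aestronglyMeasurable).smul hid)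
    have h2 : ∀ u, Ψ₀ (R u) • (R u) = (2 * (Ψ₀ u * ⟪v, u⟫)) • v - Ψ₀ u • u := by
      intro u
      have hfix : Ψ₀ (R u) = Ψ₀ u := by simp only [hΨ₀def, hRip u]
      rw [hfix, hRapp, smul_sub, smul_smul]
      ring_nf
    have h3 : I = (2 * J) • v - I := by
      refine h1.trans ?_
      simp_rw [h2]
      rw [integral_sub ((intg.const_mul 2).smul_const v) intΨ₀, integral_smul_const,
        integral_const_mul]
    have h4 : (2 : ℝ) • I = (2 : ℝ) • (J • v) := by
      have h5 : I + I = (2 * J) • v := eq_sub_iff_add_eq.mp h3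
      rw [two_smul, h5, smul_smul]
    exact smul_right_injective _ two_ne_zero h4
  -- Step A2
  set N : EuclideanSpace ℝ (Fin d) ≃ₗᵢ[ℝ] EuclideanSpace ℝ (Fin d) :=
    LinearIsometryEquiv.neg ℝ with hNdef
  have hNapp : ∀ u, N u = -u := fun _ => rfl
  have intgN : Integrable (fun u => Ψ₀ (N u) * ⟪v, N u⟫) μ := by
    refine Integrable.mono' (integrable_const 1)
      (((hΨ₀meas.comp N.continuous.measurable).mul
        (hmeasip.comp N.continuous.measurable)).aestronglyMeasurable) ?_
    filter_upwards [hip1] with u hu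
    rw [Real.norm_eq_abs, abs_mul]
    have h1 : |⟪v, N u⟫| ≤ 1 := by rw [hNapp, inner_neg_right, abs_neg]; exact hu
    calc |Ψ₀ (N u)| * |⟪v, N u⟫| ≤ 1 * 1 :=
      mul_le_mul (hΨ₀abs _) h1 (abs_nonneg _) zero_le_one
    _ = 1 := one_mul 1
  have hA2 : ∫ u, |⟪v, u⟫| ∂μ = 2 * J := by
    have hN : J = ∫ u, Ψ₀ (N u) * ⟪v, N u⟫ ∂μ :=
      keyR N _ (hΨ₀meas.mul hmeasip).aestronglyMeasurable
    have hsum : ∀ u, |⟪v, u⟫| = Ψ₀ u * ⟪v, u⟫ + Ψ₀ (N u) * ⟪v, N u⟫ := by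
      intro u
      have h1 : ⟪v, N u⟫ = -⟪v, u⟫ := by rw [hNapp, inner_neg_right]
      simp only [hΨ₀def, h1]
      rcases lt_trichotomy (⟪v, u⟫) 0 with h | h | h
      · rw [if_pos h, if_neg (by linarith), abs_of_neg h]; ring
      · simp [h]
      · rw [if_neg (by linarith), if_pos (by linarith), abs_of_pos h]; ring
    calc ∫ u, |⟪v, u⟫| ∂μ = ∫ u, (Ψ₀ u * ⟪v, u⟫ + Ψ₀ (N u) * ⟪v, N u⟫) ∂μ := by
          simp_rw [hsum]
    _ = J + J := by rw [integral_add intg intgN, ← hJdef, ← hN]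
    _ = 2 * J := by ring
  have hfinal : ((1 / 2 : ℝ) * ∫ u, |⟪v, u⟫| ∂μ) • v = I := by
    rw [hA2, hA1]
    congr 1
    ring
  rw [hfinal]
  -- Step B
  set S : Set (EuclideanSpace ℝ (Fin d)) := {u | |⟪v, u⟫| ≤ c} with hSdef
  have hS : MeasurableSet S := measurableSet_le hmeasip.abs measurable_const
  have hdiff : (∫ u, Ψ u • u ∂μ) - I = ∫ u, (Ψ u - Ψ₀ u) • u ∂μ := by
    rw [hIdef, ← integral_sub intΨ intΨ₀]
    exact integral_congr_ae (Filter.Eventually.of_forall fun u => (sub_smul _ _ _).symm)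
  rw [hdiff]
  have hbound : ∀ᵐ u ∂μ, ‖(Ψ u - Ψ₀ u) • u‖ ≤ S.indicator (fun _ => (2 : ℝ)) u := by
    filter_upwards [hae] with u hu
    rw [norm_smul, hu, mul_one, Real.norm_eq_abs]
    by_cases hmem : u ∈ S
    · rw [Set.indicator_of_mem hmem]
      calc |Ψ u - Ψ₀ u| ≤ |Ψ u| + |Ψ₀ u| := abs_sub _ _
      _ ≤ 1 + 1 := add_le_add (hΨabs u) (hΨ₀abs u)
      _ = 2 := by norm_num
    · rw [Set.indicator_of_notMem hmem]
      have hmem' : ¬ |⟪v, u⟫| ≤ c := hmem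
      rcases lt_or_ge c (⟪v, u⟫) with h | h
      · have h1 : Ψ u = 0 := hΨupper u hu h
        have h2 : Ψ₀ u = 0 := by
          simp only [hΨ₀def]
          rw [if_neg (by linarith)]
        rw [h1, h2]
        norm_num
      · have h3 : ⟪v, u⟫ < -c := by
          by_contra h''
          push_neg at h''
          exact hmem' (abs_le.mpr ⟨h'', h⟩)
        have h1 : Ψ u = -1 := hΨlower u hu h3
        have h2 : Ψ₀ u = -1 := by
          simp only [hΨ₀def]
          rw [if_pos (by linarith)]
        rw [h1, h2]
        norm_num
  calc ‖∫ u, (Ψ u - Ψ₀ u) • u ∂μ‖ ≤ ∫ u, ‖(Ψ u - Ψ₀ u) • u‖ ∂μ :=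
        norm_integral_le_integral_norm _
  _ ≤ ∫ u, S.indicator (fun _ => (2 : ℝ)) u ∂μ := by
        refine integral_mono_ae ?_ ((integrable_const (2 : ℝ)).indicator hS) hbound
        have hsub : Integrable (fun u => (Ψ u - Ψ₀ u) • u) μ := by
          exact (intΨ.sub intΨ₀).congr (Filter.Eventually.of_forall fun u => (sub_smul _ _ _).symm)
        exact hsub.norm
  _ = 2 * (μ S).toReal := by
        rw [integral_indicator_const (2 : ℝ) hS, smul_eq_mul, mul_comm]; rfl

end
end
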